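/- Let (Ω, 𝓕, μ) be a probability space, let P be an M×M real matrix such that every eigenvalue of P, viewed as a matrix over ℂ, has modulus strictly less than 1, let B be an M×n real matrix, and let u ∈ ℝⁿ. Let (P_t)_{t≥0} and (B_t)_{t≥0} be sequences of measurable random M×M and M×n real matrices on Ω such that, μ-almost surely, P_t → P and B_t → B entrywise as t → ∞. Let α(t) = a/(t+1)^δ with a > 0 and 0 < δ ≤ 1, fix x(0) ∈ ℝ^M, and define the random sequence x(t+1) = (1 − α(t))·x(t) + α(t)·(P_t·x(t) + B_t·u). Then μ-almost surely, x(t) converges as t → ∞ to (I − P)^{-1}·B·u. -/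

import Mathlib

open Filter MeasureTheory

/-- `ρ(P) < 1`: every eigenvalue of `P`, viewed as a matrix over `ℂ`
(equivalently, every complex root of its characteristic polynomial),
has modulus strictly less than `1`. -/
def SpecRadiusLtOne {M : ℕ} (P : Matrix (Fin M) (Fin M) ℝ) : Prop :=
  ∀ z : ℂ, (P.map (algebraMap ℝ ℂ)).charpoly.IsRoot z → ‖z‖ < 1


open Matrix Polynomial

section SpectralAux

variable {M : ℕ}

lemma charpoly_eval_eq (A : Matrix (Fin M) (Fin M) ℂ) (z : ℂ) :
    A.charpoly.eval z = (Matrix.scalar (Fin M) z - A).det := by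
  rw [Matrix.charpoly, _root_.eval_det, Matrix.matPolyEquiv_charmatrix]
  simp

lemma isUnit_det_one_sub {P : Matrix (Fin M) (Fin M) ℝ} (hP : SpecRadiusLtOne P) :
    IsUnit (1 - P).det := by
  rw [isUnit_iff_ne_zero]
  intro h0
  have hc : ((1 - P).det : ℂ) = 0 := by rw [h0]; simp
  have hmap : ((1 - P).map (algebraMap ℝ ℂ)).det = 0 := by
    rw [← RingHom.mapMatrix_apply, ← RingHom.map_det]; exact hc
  have hroot : (P.map (algebraMap ℝ ℂ)).charpoly.IsRoot 1 := by
    rw [Polynomial.IsRoot, charpoly_eval_eq, _root_.map_one]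
    convert hmap using 2
    simp [Matrix.map_sub, Matrix.map_one]
  have := hP 1 hroot
  simp at this

end SpectralAux

section Contraction

attribute [local instance] Matrix.linftyOpNormedRing Matrix.linftyOpNormedAlgebra

variable {M : ℕ}

lemma spec_mem_isRoot (A : Matrix (Fin M) (Fin M) ℂ) {z : ℂ} (hz : z ∈ spectrum ℂ A) :
    A.charpoly.IsRoot z := by
  rw [spectrum.mem_iff] at hz
  rw [Polynomial.IsRoot, charpoly_eval_eq]
  by_contra hdet
  exact hz ((Matrix.isUnit_iff_isUnit_det _).mpr (by
    have : algebraMap ℂ (Matrix (Fin M) (Fin M) ℂ) z = Matrix.scalar (Fin M) z := by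
      rw [Matrix.scalar_apply, Matrix.algebraMap_eq_diagonal]
      rfl
    rw [this]
    exact isUnit_iff_ne_zero.mpr hdet))

lemma exists_pow_contraction (hM : 0 < M) {P : Matrix (Fin M) (Fin M) ℝ}
    (hP : SpecRadiusLtOne P) :
    ∃ k : ℕ, 0 < k ∧ ∃ c : ℝ, 0 ≤ c ∧ c < 1 ∧
      ∀ v : Fin M → ℝ, ‖(P ^ k).mulVec v‖ ≤ c * ‖v‖ := by
  haveI : Nonempty (Fin M) := ⟨⟨0, hM⟩⟩
  set Pc : Matrix (Fin M) (Fin M) ℂ := P.map (algebraMap ℝ ℂ) with hPc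
  have hspec : spectralRadius ℂ Pc < 1 := by
    have h1 : spectralRadius ℂ Pc < ((1 : NNReal) : ENNReal) := by
      apply spectrum.spectralRadius_lt_of_forall_lt
      intro z hz
      have := hP z (spec_mem_isRoot Pc hz)
      simpa [← NNReal.coe_lt_coe, nnnorm, Complex.norm_def] using this
    simpa using h1
  have hG := spectrum.pow_nnnorm_pow_one_div_tendsto_nhds_spectralRadius Pc
  have hev : ∀ᶠ k : ℕ in atTop, (‖Pc ^ k‖₊ : ENNReal) ^ (1 / (k : ℝ)) < 1 :=
    hG.eventually_lt_const hspec
  obtain ⟨k, hk1, hk⟩ := (hev.and (eventually_ge_atTop 1)).exists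
  have hnorm : ‖Pc ^ k‖₊ < 1 := by
    by_contra hge
    push_neg at hge
    have : (1 : ENNReal) ≤ (‖Pc ^ k‖₊ : ENNReal) ^ (1 / (k : ℝ)) := by
      calc (1 : ENNReal) = (1 : ENNReal) ^ (1 / (k : ℝ)) := (ENNReal.one_rpow _).symm
        _ ≤ (‖Pc ^ k‖₊ : ENNReal) ^ (1 / (k : ℝ)) :=
          ENNReal.rpow_le_rpow (by exact_mod_cast hge) (by positivity)
    exact absurd hk1 (not_lt.mpr this)
  refine ⟨k, hk, ‖Pc ^ k‖, norm_nonneg _, ?_, ?_⟩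
  · exact_mod_cast hnorm
  · intro v
    have hmapv : ((P ^ k).mulVec v) = fun i => Complex.re ((Pc ^ k).mulVec (fun j => (v j : ℂ)) i) := by
      funext i
      have : (Pc ^ k) = (P ^ k).map (algebraMap ℝ ℂ) := by
        rw [hPc, ← RingHom.mapMatrix_apply, ← RingHom.mapMatrix_apply, map_pow]
      rw [this]
      simp [Matrix.mulVec, dotProduct, Matrix.map_apply]
    have hnc : ‖fun j => (v j : ℂ)‖ = ‖v‖ := by
      simp [Pi.norm_def]
    rw [hmapv]
    have hC : (0:ℝ) ≤ ‖Pc ^ k‖ * ‖v‖ := mul_nonneg (norm_nonneg _) (norm_nonneg _)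
    rw [pi_norm_le_iff_of_nonneg hC]
    intro i
    calc ‖((Pc ^ k).mulVec (fun j => (v j : ℂ)) i).re‖
        ≤ ‖(Pc ^ k).mulVec (fun j => (v j : ℂ)) i‖ := Complex.abs_re_le_norm _
      _ ≤ ‖(Pc ^ k).mulVec fun j => (v j : ℂ)‖ := norm_le_pi_norm _ i
      _ ≤ ‖Pc ^ k‖ * ‖fun j => (v j : ℂ)‖ := Matrix.linfty_opNorm_mulVec _ _
      _ = ‖Pc ^ k‖ * ‖v‖ := by rw [hnc]

end Contraction

noncomputable def entSum {M m' : ℕ} (A : Matrix (Fin M) (Fin m') ℝ) : ℝ := ∑ i, ∑ j, |A i j|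

lemma entSum_nonneg {M m' : ℕ} (A : Matrix (Fin M) (Fin m') ℝ) : 0 ≤ entSum A :=
  Finset.sum_nonneg fun _ _ => Finset.sum_nonneg fun _ _ => abs_nonneg _

lemma norm_mulVec_le {M m' : ℕ} (A : Matrix (Fin M) (Fin m') ℝ) (v : Fin m' → ℝ) :
    ‖A.mulVec v‖ ≤ entSum A * ‖v‖ := by
  have hC : (0:ℝ) ≤ entSum A * ‖v‖ := mul_nonneg (entSum_nonneg A) (norm_nonneg _)
  rw [pi_norm_le_iff_of_nonneg hC]
  intro i
  calc ‖A.mulVec v i‖ = |∑ j, A i j * v j| := rfl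
    _ ≤ ∑ j, |A i j * v j| := Finset.abs_sum_le_sum_abs _ _
    _ = ∑ j, |A i j| * |v j| := by simp [abs_mul]
    _ ≤ ∑ j, |A i j| * ‖v‖ := Finset.sum_le_sum fun j _ =>
        mul_le_mul_of_nonneg_left (norm_le_pi_norm v j) (abs_nonneg _)
    _ = (∑ j, |A i j|) * ‖v‖ := by rw [Finset.sum_mul]
    _ ≤ entSum A * ‖v‖ := by
        apply mul_le_mul_of_nonneg_right _ (norm_nonneg _)
        exact Finset.single_le_sum (f := fun i => ∑ j, |A i j|)
          (fun i _ => Finset.sum_nonneg fun _ _ => abs_nonneg _) (Finset.mem_univ i)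

lemma entSum_tendsto_zero {M m' : ℕ} {At : ℕ → Matrix (Fin M) (Fin m') ℝ}
    {A : Matrix (Fin M) (Fin m') ℝ}
    (h : ∀ i j, Tendsto (fun t => At t i j) atTop (nhds (A i j))) :
    Tendsto (fun t => entSum (At t - A)) atTop (nhds 0) := by
  have : Tendsto (fun t => ∑ i : Fin M, ∑ j : Fin m', |At t i j - A i j|)
      atTop (nhds (∑ i : Fin M, ∑ j : Fin m', (0:ℝ))) := by
    apply tendsto_finset_sum
    intro i _
    apply tendsto_finset_sum
    intro j _
    have h0 : Tendsto (fun t => At t i j - A i j) atTop (nhds (A i j - A i j)) :=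
      (h i j).sub tendsto_const_nhds
    rw [sub_self] at h0
    simpa using h0.abs
  simpa [entSum] using this

lemma scalar_rec_tendsto_zero (b η αs : ℕ → ℝ) (c : ℝ) (hc : 0 < c)
    (hb : ∀ t, 0 ≤ b t) (hαpos : ∀ t, 0 ≤ αs t)
    (hsum : Tendsto (fun m => ∑ t ∈ Finset.range m, αs t) atTop atTop)
    (hη : Tendsto η atTop (nhds 0))
    (hαsmall : ∀ᶠ t in atTop, c * αs t ≤ 1)
    (hrec : ∀ᶠ t in atTop, b (t+1) ≤ (1 - c * αs t) * b t + αs t * η t) :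
    Tendsto b atTop (nhds 0) := by
  rw [Metric.tendsto_atTop]
  intro ε hε
  -- it suffices to show b t ≤ ε/2 eventually
  suffices h : ∃ T, ∀ t ≥ T, b t ≤ ε / 2 by
    obtain ⟨T, hT⟩ := h
    exact ⟨T, fun t ht => by
      have := hT t ht
      rw [Real.dist_eq, sub_zero, abs_of_nonneg (hb t)]
      linarith⟩
  set e := ε / 2 with he
  have hepos : 0 < e := by positivity
  -- choose T beyond which everything holds
  obtain ⟨T₁, hT₁⟩ := eventually_atTop.mp hαsmall
  obtain ⟨T₂, hT₂⟩ := eventually_atTop.mp hrec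
  obtain ⟨T₃, hT₃⟩ := eventually_atTop.mp
    (hη.eventually (eventually_le_nhds (by positivity : (0:ℝ) < c * e / 2)))
  set T := max T₁ (max T₂ T₃) with hT
  have key : ∀ t ≥ T, b (t+1) ≤ (1 - c * αs t) * b t + αs t * (c * e / 2) ∧ c * αs t ≤ 1 := by
    intro t ht
    refine ⟨le_trans (hT₂ t (le_trans (le_trans (le_max_left T₂ T₃) (le_max_right _ _)) ht)) ?_,
      hT₁ t (le_trans (le_max_left _ _) ht)⟩
    have hηt : η t ≤ c * e / 2 := hT₃ t (le_trans (le_trans (le_max_right T₂ T₃) (le_max_right _ _)) ht)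
    have := mul_le_mul_of_nonneg_left hηt (hαpos t)
    linarith
  -- step 1 : once below e, stays below e
  have stay : ∀ t ≥ T, b t ≤ e → b (t+1) ≤ e := by
    intro t ht hbt
    obtain ⟨h1, h2⟩ := key t ht
    have h3 : 0 ≤ 1 - c * αs t := by linarith
    have h4 : (1 - c * αs t) * b t ≤ (1 - c * αs t) * e := mul_le_mul_of_nonneg_left hbt h3
    have h5 : αs t * (c * e / 2) ≤ αs t * (c * e) := by
      apply mul_le_mul_of_nonneg_left _ (hαpos t)
      nlinarith
    nlinarith [hαpos t, mul_nonneg (hαpos t) (mul_nonneg hc.le hepos.le)]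
  -- step 2 : must get below e at some time ≥ T
  have enter : ∃ t ≥ T, b t ≤ e := by
    by_contra hno
    push_neg at hno
    have decr : ∀ t ≥ T, b (t+1) ≤ b t - (c * e / 2) * αs t := by
      intro t ht
      obtain ⟨h1, h2⟩ := key t ht
      have hbt : e < b t := hno t ht
      have h3 : 0 ≤ c * αs t := mul_nonneg hc.le (hαpos t)
      nlinarith
    have hsumdiff : ∀ m : ℕ, b (T + m) ≤ b T - (c * e / 2) * ∑ t ∈ Finset.range m, αs (T + t) := by
      intro m
      induction m with
      | zero => simp
      | succ m ih =>
        have := decr (T + m) (Nat.le_add_right _ _)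
        rw [Finset.sum_range_succ]
        have : b (T + (m+1)) ≤ b (T + m) - (c * e / 2) * αs (T + m) := by
          rw [← Nat.add_assoc]; exact this
        linarith
    -- partial sums of shifted sequence tend to infinity
    have hshift : Tendsto (fun m => ∑ t ∈ Finset.range m, αs (T + t)) atTop atTop := by
      have hfull : Tendsto (fun m : ℕ => ∑ t ∈ Finset.range (T + m), αs t) atTop atTop :=
        hsum.comp (tendsto_atTop_mono (fun m => Nat.le_add_left m T) tendsto_id)
      have heq : ∀ m : ℕ, ∑ t ∈ Finset.range (T + m), αs t
          = (∑ t ∈ Finset.range T, αs t) + ∑ t ∈ Finset.range m, αs (T + t) := fun m =>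
        Finset.sum_range_add _ _ _
      simp_rw [heq] at hfull
      exact Tendsto.atTop_of_const_add _ hfull
    obtain ⟨m, hm⟩ := (hshift.eventually_ge_atTop ((b T + 1) / (c * e / 2))).exists
    have hS : b T + 1 ≤ (c * e / 2) * ∑ t ∈ Finset.range m, αs (T + t) := by
      rw [div_le_iff₀ (by positivity)] at hm
      linarith [hm]
    have := hsumdiff m
    have hbTm := hb (T + m)
    linarith
  obtain ⟨t₀, ht₀T, ht₀⟩ := enter
  refine ⟨t₀, fun t ht => ?_⟩
  -- induction from t₀
  clear hη hαsmall hrec hsum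
  obtain ⟨m, rfl⟩ := Nat.exists_eq_add_of_le ht
  induction m with
  | zero => simpa using ht₀
  | succ m ih =>
    have h1 : t₀ + m ≥ T := le_trans ht₀T (Nat.le_add_right _ _)
    have h2 := stay (t₀ + m) h1 (ih (Nat.le_add_right _ _))
    rwa [Nat.add_assoc] at h2

lemma deterministic_tendsto {M n : ℕ} (P : Matrix (Fin M) (Fin M) ℝ) (hP : SpecRadiusLtOne P)
    (B : Matrix (Fin M) (Fin n) ℝ) (u : Fin n → ℝ)
    (Pt : ℕ → Matrix (Fin M) (Fin M) ℝ) (Bt : ℕ → Matrix (Fin M) (Fin n) ℝ)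
    (hp : Tendsto (fun t => entSum (Pt t - P)) atTop (nhds 0))
    (hbb : Tendsto (fun t => entSum (Bt t - B)) atTop (nhds 0))
    (αs : ℕ → ℝ) (hα0 : ∀ t, 0 ≤ αs t) (hα1 : Tendsto αs atTop (nhds 0))
    (hsum : Tendsto (fun m => ∑ t ∈ Finset.range m, αs t) atTop atTop)
    (x : ℕ → Fin M → ℝ)
    (hrec : ∀ t, x (t+1) = (1 - αs t) • x t + αs t • ((Pt t).mulVec (x t) + (Bt t).mulVec u)) :
    Tendsto x atTop (nhds ((1 - P)⁻¹.mulVec (B.mulVec u))) := by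
  rcases Nat.eq_zero_or_pos M with hM | hM
  · subst hM
    have hxeq : ∀ t, x t = (1 - P)⁻¹.mulVec (B.mulVec u) := fun t => funext fun i => i.elim0
    have : x = fun _ => (1 - P)⁻¹.mulVec (B.mulVec u) := funext hxeq
    rw [this]
    exact tendsto_const_nhds
  set xs := (1 - P)⁻¹.mulVec (B.mulVec u) with hxs
  have hdet := isUnit_det_one_sub hP
  have hfix : (1 - P).mulVec xs = B.mulVec u := by
    rw [hxs, Matrix.mulVec_mulVec, Matrix.mul_nonsing_inv _ hdet, Matrix.one_mulVec]
  have hPxs : P.mulVec xs = xs - B.mulVec u := by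
    rw [Matrix.sub_mulVec, Matrix.one_mulVec] at hfix
    have := hfix
    abel_nf
    abel_nf at this
    linear_combination (norm := abel) -this
  obtain ⟨k, hk, c, hc0, hc1, hcontr⟩ := exists_pow_contraction hM hP
  set c' : ℝ := max c (1/2) with hc'
  have hc'pos : 0 < c' := lt_of_lt_of_le (by norm_num) (le_max_right _ _)
  have hc'1 : c' < 1 := max_lt hc1 (by norm_num)
  set s : ℝ := c' ^ ((k : ℝ)⁻¹) with hs
  have hs0 : 0 < s := Real.rpow_pos_of_pos hc'pos _
  have hs1 : s < 1 :=
    Real.rpow_lt_one hc'pos.le hc'1 (by positivity)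
  have hsk : s ^ k = c' := by
    rw [hs, ← Real.rpow_natCast (c' ^ ((k:ℝ)⁻¹)) k, ← Real.rpow_mul hc'pos.le,
      inv_mul_cancel₀ (by exact_mod_cast hk.ne'), Real.rpow_one]
  -- Lyapunov norm
  set N : (Fin M → ℝ) → ℝ := fun v => ∑ j ∈ Finset.range k, s ^ (k - 1 - j) * ‖(P ^ j).mulVec v‖
    with hN
  have hN0 : ∀ v, 0 ≤ N v := fun v =>
    Finset.sum_nonneg fun j _ => mul_nonneg (pow_nonneg hs0.le _) (norm_nonneg _)
  have hNlow : ∀ v, s ^ (k - 1) * ‖v‖ ≤ N v := by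
    intro v
    have h0 : (0 : ℕ) ∈ Finset.range k := Finset.mem_range.mpr hk
    have := Finset.single_le_sum
      (f := fun j => s ^ (k - 1 - j) * ‖(P ^ j).mulVec v‖)
      (fun j _ => mul_nonneg (pow_nonneg hs0.le _) (norm_nonneg _)) h0
    simpa [Matrix.one_mulVec] using this
  set D : ℝ := ∑ j ∈ Finset.range k, s ^ (k - 1 - j) * entSum (P ^ j) with hD
  have hNup : ∀ v, N v ≤ D * ‖v‖ := by
    intro v
    rw [hN, hD, Finset.sum_mul]
    apply Finset.sum_le_sum
    intro j _
    rw [mul_assoc]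
    exact mul_le_mul_of_nonneg_left (norm_mulVec_le _ _) (pow_nonneg hs0.le _)
  have hNadd : ∀ v w, N (v + w) ≤ N v + N w := by
    intro v w
    rw [hN, ← Finset.sum_add_distrib]
    apply Finset.sum_le_sum
    intro j _
    rw [Matrix.mulVec_add, ← mul_add]
    exact mul_le_mul_of_nonneg_left (norm_add_le _ _) (pow_nonneg hs0.le _)
  have hNsmul : ∀ (r : ℝ) v, N (r • v) = |r| * N v := by
    intro r v
    rw [hN, Finset.mul_sum]
    apply Finset.sum_congr rfl
    intro j _
    rw [Matrix.mulVec_smul, norm_smul, Real.norm_eq_abs]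
    ring
  have hNP : ∀ v, N (P.mulVec v) ≤ s * N v := by
    intro v
    have hrw : ∀ j, (P ^ j).mulVec (P.mulVec v) = (P ^ (j+1)).mulVec v := by
      intro j
      rw [Matrix.mulVec_mulVec, ← pow_succ]
    have hk1 : k = (k - 1) + 1 := (Nat.succ_pred_eq_of_pos hk).symm
    -- expand N (P.mulVec v)
    have expand1 : N (P.mulVec v)
        = (∑ j ∈ Finset.range (k-1), s ^ (k - 1 - j) * ‖(P ^ (j+1)).mulVec v‖)
          + ‖(P ^ k).mulVec v‖ := by
      simp only [hN]
      simp only [hrw]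
      conv_lhs => rw [hk1, Finset.sum_range_succ]
      simp only [Nat.add_sub_cancel, Nat.sub_self, pow_zero, one_mul, ← hk1]
    have expand2 : N v
        = (∑ j ∈ Finset.range (k-1), s ^ (k - 1 - (j+1)) * ‖(P ^ (j+1)).mulVec v‖)
          + s ^ (k-1) * ‖v‖ := by
      simp only [hN]
      conv_lhs => rw [hk1, Finset.sum_range_succ']
      simp only [Nat.add_sub_cancel, Nat.sub_zero, pow_zero, Matrix.one_mulVec, ← hk1]
    have hterm : ∀ j ∈ Finset.range (k-1),
        s ^ (k - 1 - j) * ‖(P ^ (j+1)).mulVec v‖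
          = s * (s ^ (k - 1 - (j+1)) * ‖(P ^ (j+1)).mulVec v‖) := by
      intro j hj
      rw [Finset.mem_range] at hj
      have : k - 1 - j = (k - 1 - (j+1)) + 1 := by omega
      rw [this, pow_succ]
      ring
    have hlast : ‖(P ^ k).mulVec v‖ ≤ s * (s ^ (k-1) * ‖v‖) := by
      calc ‖(P ^ k).mulVec v‖ ≤ c * ‖v‖ := hcontr v
        _ ≤ c' * ‖v‖ := mul_le_mul_of_nonneg_right (le_max_left _ _) (norm_nonneg _)
        _ = s ^ k * ‖v‖ := by rw [hsk]
        _ = s * (s ^ (k-1) * ‖v‖) := by rw [← mul_assoc, ← pow_succ', ← hk1]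
    calc N (P.mulVec v)
        = (∑ j ∈ Finset.range (k-1), s ^ (k - 1 - j) * ‖(P ^ (j+1)).mulVec v‖)
          + ‖(P ^ k).mulVec v‖ := expand1
      _ ≤ (∑ j ∈ Finset.range (k-1), s * (s ^ (k - 1 - (j+1)) * ‖(P ^ (j+1)).mulVec v‖))
          + s * (s ^ (k-1) * ‖v‖) := by
          exact add_le_add (le_of_eq (Finset.sum_congr rfl hterm)) hlast
      _ = s * N v := by rw [expand2, mul_add, Finset.mul_sum]
  -- error sequence
  have hD0 : 0 ≤ D := Finset.sum_nonneg fun j _ =>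
    mul_nonneg (pow_nonneg hs0.le _) (entSum_nonneg _)
  set w : ℕ → Fin M → ℝ := fun t => (Pt t - P).mulVec xs + (Bt t - B).mulVec u with hw
  set ev : ℕ → Fin M → ℝ := fun t => x t - xs with hevd
  have herec : ∀ t, ev (t+1) =
      ((1 - αs t) • ev t + αs t • ((Pt t).mulVec (ev t))) + αs t • w t := by
    intro t
    simp only [hevd, hw, hrec t, Matrix.mulVec_sub, Matrix.sub_mulVec, hPxs]
    module
  set b : ℕ → ℝ := fun t => N (ev t) with hbd
  set C : ℝ := D / s ^ (k-1) with hCd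
  have hevb : ∀ t, ‖ev t‖ ≤ b t / s ^ (k-1) := by
    intro t
    rw [le_div_iff₀ (pow_pos hs0 _), mul_comm]
    exact hNlow (ev t)
  have hNPt : ∀ t, N ((Pt t).mulVec (ev t)) ≤ s * b t + C * entSum (Pt t - P) * b t := by
    intro t
    have hsplit : (Pt t).mulVec (ev t) = P.mulVec (ev t) + (Pt t - P).mulVec (ev t) := by
      rw [Matrix.sub_mulVec]; abel
    calc N ((Pt t).mulVec (ev t))
        ≤ N (P.mulVec (ev t)) + N ((Pt t - P).mulVec (ev t)) := by
          rw [hsplit]; exact hNadd _ _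
      _ ≤ s * b t + D * ‖(Pt t - P).mulVec (ev t)‖ := add_le_add (hNP _) (hNup _)
      _ ≤ s * b t + D * (entSum (Pt t - P) * ‖ev t‖) :=
          add_le_add_right (mul_le_mul_of_nonneg_left (norm_mulVec_le _ _) hD0) _
      _ ≤ s * b t + D * (entSum (Pt t - P) * (b t / s ^ (k-1))) :=
          add_le_add_right (mul_le_mul_of_nonneg_left
            (mul_le_mul_of_nonneg_left (hevb t) (entSum_nonneg _)) hD0) _
      _ = s * b t + C * entSum (Pt t - P) * b t := by
          rw [hCd]; field_simp
  set η : ℕ → ℝ := fun t => D * (entSum (Pt t - P) * ‖xs‖ + entSum (Bt t - B) * ‖u‖) with hηd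
  have hηconv : Tendsto η atTop (nhds 0) := by
    have h1 : Tendsto (fun t => D * (entSum (Pt t - P) * ‖xs‖ + entSum (Bt t - B) * ‖u‖))
        atTop (nhds (D * ((0:ℝ) * ‖xs‖ + (0:ℝ) * ‖u‖))) :=
      tendsto_const_nhds.mul ((hp.mul_const _).add (hbb.mul_const _))
    simpa [hηd] using h1
  have hηw : ∀ t, N (w t) ≤ η t := by
    intro t
    calc N (w t) ≤ D * ‖w t‖ := hNup _
      _ ≤ η t := by
        have h1 := norm_mulVec_le (Pt t - P) xs
        have h2 := norm_mulVec_le (Bt t - B) u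
        have h3 : ‖w t‖ ≤ entSum (Pt t - P) * ‖xs‖ + entSum (Bt t - B) * ‖u‖ :=
          le_trans (norm_add_le _ _) (add_le_add h1 h2)
        exact mul_le_mul_of_nonneg_left h3 hD0
  have hcpos : 0 < (1 - s) / 2 := by linarith
  have hev1 : ∀ᶠ t in atTop, αs t ≤ 1 := hα1.eventually (eventually_le_nhds one_pos)
  have hev2 : ∀ᶠ t in atTop, C * entSum (Pt t - P) ≤ (1 - s) / 2 := by
    have h1 : Tendsto (fun t => C * entSum (Pt t - P)) atTop (nhds (C * 0)) :=
      tendsto_const_nhds.mul hp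
    rw [mul_zero] at h1
    exact h1.eventually (eventually_le_nhds hcpos)
  have hbree : ∀ᶠ t in atTop, b (t+1) ≤ (1 - ((1-s)/2) * αs t) * b t + αs t * η t := by
    filter_upwards [hev1, hev2] with t h1 h2
    have e1 : b (t+1)
        ≤ N ((1 - αs t) • ev t) + N (αs t • ((Pt t).mulVec (ev t))) + N (αs t • w t) := by
      calc b (t+1) = N (((1 - αs t) • ev t + αs t • ((Pt t).mulVec (ev t))) + αs t • w t) := by
            rw [hbd]; simp only; rw [herec t]
        _ ≤ N ((1 - αs t) • ev t + αs t • ((Pt t).mulVec (ev t))) + N (αs t • w t) := hNadd _ _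
        _ ≤ N ((1 - αs t) • ev t) + N (αs t • ((Pt t).mulVec (ev t))) + N (αs t • w t) :=
            add_le_add_left (hNadd _ _) _
    rw [hNsmul, hNsmul, hNsmul, abs_of_nonneg (by linarith : (0:ℝ) ≤ 1 - αs t),
      abs_of_nonneg (hα0 t)] at e1
    have e2 := hNPt t
    have e3 := hηw t
    have e4 : αs t * (C * entSum (Pt t - P) * b t) ≤ αs t * ((1-s)/2 * b t) :=
      mul_le_mul_of_nonneg_left (mul_le_mul_of_nonneg_right h2 (hN0 _)) (hα0 t)
    have e5 : αs t * N ((Pt t).mulVec (ev t)) ≤ αs t * (s * b t + C * entSum (Pt t - P) * b t) :=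
      mul_le_mul_of_nonneg_left e2 (hα0 t)
    have e6 : αs t * N (w t) ≤ αs t * η t := mul_le_mul_of_nonneg_left e3 (hα0 t)
    nlinarith [hN0 (ev t), hα0 t]
  have hαsmall : ∀ᶠ t in atTop, ((1-s)/2) * αs t ≤ 1 := by
    have h1 : Tendsto (fun t => ((1-s)/2) * αs t) atTop (nhds (((1-s)/2) * 0)) :=
      tendsto_const_nhds.mul hα1
    rw [mul_zero] at h1
    exact h1.eventually (eventually_le_nhds one_pos)
  have hb0 : Tendsto b atTop (nhds 0) :=
    scalar_rec_tendsto_zero b η αs ((1-s)/2) hcpos (fun t => hN0 _) hα0 hsum hηconv hαsmall hbree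
  have hevnorm : Tendsto (fun t => ‖ev t‖) atTop (nhds 0) := by
    apply squeeze_zero (fun t => norm_nonneg _) hevb
    simpa using hb0.div_const (s ^ (k-1))
  rw [tendsto_iff_norm_sub_tendsto_zero]
  exact hevnorm


/-- Main DILAND convergence theorem: on a probability space `(Ω, 𝓕, μ)`, if
`ρ(P) < 1` and the random matrices `P_t, B_t` converge to `P, B` almost surely,
then with `α(t) = a/(t+1)^δ` (`a > 0`, `0 < δ ≤ 1`) the random iterates
`x(t+1) = (1 - α(t))·x(t) + α(t)·(P_t·x(t) + B_t·u)` converge almost surely to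
`(I - P)⁻¹·B·u`, the exact sensor locations. -/
theorem diland_as_convergence
    {Ω : Type*} [MeasurableSpace Ω] (μ : Measure Ω) [IsProbabilityMeasure μ]
    (M n : ℕ) (P : Matrix (Fin M) (Fin M) ℝ) (hP : SpecRadiusLtOne P)
    (B : Matrix (Fin M) (Fin n) ℝ) (u : Fin n → ℝ)
    (Pt : ℕ → Ω → Matrix (Fin M) (Fin M) ℝ)
    (Bt : ℕ → Ω → Matrix (Fin M) (Fin n) ℝ)
    (hPtmeas : ∀ (t : ℕ) (i j : Fin M), Measurable fun ω => Pt t ω i j)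
    (hBtmeas : ∀ (t : ℕ) (i : Fin M) (k : Fin n), Measurable fun ω => Bt t ω i k)
    (hconv : ∀ᵐ ω ∂μ,
      Tendsto (fun t => Pt t ω) atTop (nhds P) ∧
      Tendsto (fun t => Bt t ω) atTop (nhds B))
    (a δ : ℝ) (ha : 0 < a) (hδ0 : 0 < δ) (hδ1 : δ ≤ 1)
    (α : ℕ → ℝ) (hα : ∀ t : ℕ, α t = a / ((t : ℝ) + 1) ^ δ)
    (x0 : Fin M → ℝ) (x : ℕ → Ω → Fin M → ℝ)
    (hx0 : ∀ ω, x 0 ω = x0)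
    (hrec : ∀ (t : ℕ) (ω : Ω), x (t + 1) ω =
      (1 - α t) • x t ω + α t • ((Pt t ω).mulVec (x t ω) + (Bt t ω).mulVec u)) :
    ∀ᵐ ω ∂μ, Tendsto (fun t => x t ω) atTop
      (nhds ((1 - P)⁻¹.mulVec (B.mulVec u))) := by
  have hα0 : ∀ t, 0 ≤ α t := by
    intro t
    rw [hα t]
    positivity
  have hdenom : Tendsto (fun t : ℕ => ((t : ℝ) + 1) ^ δ) atTop atTop :=
    (tendsto_rpow_atTop hδ0).comp
      (tendsto_atTop_add_const_right atTop 1 tendsto_natCast_atTop_atTop)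
  have hα1 : Tendsto α atTop (nhds 0) := by
    have h1 : Tendsto (fun t : ℕ => a / ((t : ℝ) + 1) ^ δ) atTop (nhds 0) :=
      Tendsto.div_atTop tendsto_const_nhds hdenom
    have : α = fun t : ℕ => a / ((t : ℝ) + 1) ^ δ := funext hα
    rw [this]
    exact h1
  have hharm : ¬ Summable (fun t : ℕ => 1 / ((t : ℝ) + 1)) := by
    intro hs
    apply Real.not_summable_one_div_natCast
    have := (summable_nat_add_iff (f := fun t : ℕ => 1 / (t : ℝ)) 1).mp (by push_cast; exact hs)
    exact this
  have hlb : ∀ t : ℕ, a * (1 / ((t : ℝ) + 1)) ≤ α t := by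
    intro t
    rw [hα t, mul_one_div]
    apply div_le_div_of_nonneg_left ha.le
    · exact Real.rpow_pos_of_pos (by positivity) _
    · calc ((t:ℝ) + 1) ^ δ ≤ ((t:ℝ) + 1) ^ (1:ℝ) :=
          Real.rpow_le_rpow_of_exponent_le (by linarith [Nat.cast_nonneg (α := ℝ) t]) hδ1
        _ = (t:ℝ) + 1 := Real.rpow_one _
  have hnotsum : ¬ Summable α := by
    intro hs
    have h1 : Summable (fun t : ℕ => a * (1 / ((t : ℝ) + 1))) :=
      Summable.of_nonneg_of_le (fun t => by positivity) hlb hs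
    exact hharm ((summable_mul_left_iff ha.ne').mp h1)
  have hsum : Tendsto (fun m => ∑ t ∈ Finset.range m, α t) atTop atTop :=
    (not_summable_iff_tendsto_nat_atTop_of_nonneg hα0).mp hnotsum
  filter_upwards [hconv] with ω hω
  obtain ⟨hPω, hBω⟩ := hω
  have hpe : ∀ i j, Tendsto (fun t => Pt t ω i j) atTop (nhds (P i j)) := fun i j =>
    tendsto_pi_nhds.mp (tendsto_pi_nhds.mp hPω i) j
  have hbe : ∀ i j, Tendsto (fun t => Bt t ω i j) atTop (nhds (B i j)) := fun i j =>
    tendsto_pi_nhds.mp (tendsto_pi_nhds.mp hBω i) j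
  exact deterministic_tendsto P hP B u (fun t => Pt t ω) (fun t => Bt t ω)
    (entSum_tendsto_zero hpe) (entSum_tendsto_zero hbe)
    α hα0 hα1 hsum (fun t => x t ω) (fun t => hrec t ω)
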